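/- Let n > 2 be an integer and h a real number with h > n − 1, and let m^{(n,h)}(ξ) = (1/2) Σ_{k=0}^{n+1} a_k^{(n,h)} e^{-ikξ} with a_k^{(n,h)} = 2^{-h}[C(n+1,k) + 4(2^{h−n} − 1)C(n−1,k−1)]. Then for all real ξ, m^{(n,h)}(ξ) = e^{-i(n+1)ξ/2} · cos(ξ/2)^{n−1} · (2^{h−n+1} − 1 + cos ξ) / 2^{h−n+1}. -/

import Mathlib

/-- The GP mask `a_k^{(n,h)} = 2^{-h}[C(n+1,k) + 4(2^{h−n}−1)C(n−1,k−1)]`,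
with the convention `C(n−1,−1) = 0`. -/
noncomputable def gpMask (n : ℕ) (h : ℝ) (k : ℕ) : ℝ :=
  (2 : ℝ) ^ (-h) * (((n + 1).choose k : ℝ) +
    4 * ((2 : ℝ) ^ (h - (n : ℝ)) - 1) *
      (if k = 0 then 0 else ((n - 1).choose (k - 1) : ℝ)))

/-- Explicit form of the GP trigonometric symbol:
`m^{(n,h)}(ξ) = e^{-i(n+1)ξ/2} cos(ξ/2)^{n−1} (2^{h−n+1} − 1 + cos ξ)/2^{h−n+1}`. -/
theorem stmt_18 (n : ℕ) (hn : 2 < n) (h : ℝ) (hh : (n : ℝ) - 1 < h) :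
    ∀ ξ : ℝ,
      (1 / 2 : ℂ) * ∑ k ∈ Finset.range (n + 2),
          (gpMask n h k : ℂ) * Complex.exp (-(k : ℂ) * Complex.I * (ξ : ℂ)) =
        Complex.exp (-Complex.I * ((n : ℂ) + 1) * (ξ : ℂ) / 2) *
          ((Real.cos (ξ / 2) : ℝ) : ℂ) ^ (n - 1) *
          ((((2 : ℝ) ^ (h - (n : ℝ) + 1) - 1 + Real.cos ξ : ℝ)) : ℂ) /
          ((((2 : ℝ) ^ (h - (n : ℝ) + 1) : ℝ)) : ℂ) := by
  obtain ⟨m, rfl⟩ : ∃ m, n = m + 3 := ⟨n - 3, by omega⟩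
  intro ξ
  set w : ℂ := Complex.exp (-Complex.I * ξ / 2) with hw
  set z : ℂ := Complex.exp (-Complex.I * ξ) with hzdef
  set c : ℂ := ((Real.cos (ξ / 2) : ℝ) : ℂ) with hc
  set A : ℂ := (((2 : ℝ) ^ (h - ((m : ℝ) + 3)) : ℝ) : ℂ) with hA
  set B : ℂ := (((2 : ℝ) ^ (-h) : ℝ) : ℂ) with hB
  have hz : z = w ^ 2 := by
    rw [hw, hzdef, sq, ← Complex.exp_add]; congr 1; ring
  have key2 : ∀ a b d : ℂ,
      Complex.exp d * (2 * ((Complex.exp a + Complex.exp b) / 2)) =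
        Complex.exp (d + a) + Complex.exp (d + b) := by
    intro a b d; rw [Complex.exp_add, Complex.exp_add]; ring
  have hzc : z + 1 = w * (2 * c) := by
    rw [hc, Complex.ofReal_cos, Complex.cos, hw, hzdef]
    push_cast
    rw [key2]
    rw [show -Complex.I * ξ / 2 + (ξ : ℂ) / 2 * Complex.I = 0 by ring,
      show -Complex.I * ξ / 2 + -((ξ : ℂ) / 2) * Complex.I = -Complex.I * ξ by ring,
      Complex.exp_zero]
    ring
  have hexp : Complex.exp (-Complex.I * (((m + 3 : ℕ) : ℂ) + 1) * ξ / 2) = w ^ (m + 4) := by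
    rw [hw, ← Complex.exp_nat_mul]; congr 1; push_cast; ring
  have s1 : ∑ k ∈ Finset.range (m + 5), (((m + 4).choose k : ℕ) : ℂ) * z ^ k
      = (z + 1) ^ (m + 4) := by
    rw [add_pow]
    refine Finset.sum_congr rfl fun k _ => ?_
    simp [mul_comm]
  have s2 : ∑ k ∈ Finset.range (m + 5),
      (if k = 0 then (0 : ℂ) else ((m + 2).choose (k - 1) : ℂ)) * z ^ k
      = z * (z + 1) ^ (m + 2) := by
    rw [Finset.sum_range_succ', Finset.sum_range_succ]
    have h0 : (m + 2).choose (m + 3) = 0 := Nat.choose_eq_zero_of_lt (by omega)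
    simp only [Nat.succ_ne_zero, if_neg, if_pos, Nat.add_sub_cancel, h0, Nat.cast_zero,
      zero_mul, add_zero, if_true, reduceIte]
    rw [add_pow, Finset.mul_sum]
    refine Finset.sum_congr rfl fun k _ => ?_
    simp [pow_succ, mul_comm, mul_assoc, mul_left_comm]
  have key : ∑ k ∈ Finset.range (m + 3 + 2),
      (gpMask (m + 3) h k : ℂ) * Complex.exp (-(k : ℂ) * Complex.I * ξ)
      = B * ((z + 1) ^ (m + 4) + 4 * (A - 1) * (z * (z + 1) ^ (m + 2))) := by
    have e1 : ∀ k : ℕ, Complex.exp (-(k : ℂ) * Complex.I * ξ) = z ^ k := by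
      intro k
      rw [hzdef, show -(k : ℂ) * Complex.I * ξ = k * (-Complex.I * ξ) by ring,
        Complex.exp_nat_mul]
    have step : ∑ k ∈ Finset.range (m + 3 + 2),
        (gpMask (m + 3) h k : ℂ) * Complex.exp (-(k : ℂ) * Complex.I * ξ)
        = ∑ k ∈ Finset.range (m + 5),
            (B * ((((m + 4).choose k : ℕ) : ℂ) * z ^ k) +
              (B * (4 * (A - 1))) *
                ((if k = 0 then (0 : ℂ) else ((m + 2).choose (k - 1) : ℂ)) * z ^ k)) := by
      refine Finset.sum_congr rfl fun k _ => ?_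
      rw [e1]
      simp only [gpMask, hA, hB]
      by_cases hk : k = 0
      · subst hk; push_cast; simp
      · rw [if_neg hk, if_neg hk]
        have h1 : (m + 3) - 1 = m + 2 := by omega
        rw [h1, show (m + 3) + 1 = m + 4 from rfl]
        push_cast
        ring
    rw [step, Finset.sum_add_distrib, ← Finset.mul_sum, ← Finset.mul_sum, s1, s2]
    ring
  have hApos : (0:ℝ) < (2:ℝ) ^ (h - ((m : ℝ) + 3)) := Real.rpow_pos_of_pos (by norm_num) _
  have hAne : A ≠ 0 := by
    rw [hA]; exact_mod_cast ne_of_gt hApos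
  have hBA : B * (A * (2 : ℂ) ^ (m + 3)) = 1 := by
    rw [hB, hA]
    have e2 : ((2:ℂ) ^ (m+3)) = (((2:ℝ) ^ (m+3) : ℝ) : ℂ) := by push_cast; ring
    rw [e2, ← Complex.ofReal_mul, ← Complex.ofReal_mul]
    rw [← Real.rpow_natCast 2 (m+3), ← Real.rpow_add (by norm_num), ← Real.rpow_add (by norm_num)]
    norm_num
  have h2A : (((2:ℝ) ^ (h - ((m : ℝ) + 3) + 1) : ℝ) : ℂ) = 2 * A := by
    rw [hA, Real.rpow_add_one (by norm_num : (2:ℝ) ≠ 0)]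
    push_cast
    ring
  have hcosx : Complex.cos (ξ : ℂ) = 2 * c ^ 2 - 1 := by
    rw [← Complex.ofReal_cos]
    have hcs := Real.cos_sq (ξ / 2)
    rw [show 2 * (ξ / 2) = ξ by ring] at hcs
    have h2 : Real.cos ξ = 2 * Real.cos (ξ / 2) ^ 2 - 1 := by rw [hcs]; ring
    rw [h2, hc]; push_cast; ring
  rw [key, hexp]
  push_cast
  rw [hcosx, hzc, hz]
  rw [h2A]
  have h2ne : (2 : ℂ) ^ (m + 3) ≠ 0 := pow_ne_zero _ two_ne_zero
  have hBval : B = (A * (2:ℂ) ^ (m+3))⁻¹ := eq_inv_of_mul_eq_one_left hBA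
  rw [hBval]
  field_simp
  ring
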